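/- Let X be a real infinite-dimensional Banach space with a Schauder basis (x_n)_{n=1}^∞ with basis constant K. Then sh((x_n)) ≤ 4K³·wk_X(B_X). -/

import Mathlib

open Filter Metric NormedSpace Set Topology

noncomputable section

variable {E : Type*} [NormedAddCommGroup E] [NormedSpace ℝ E]

/-- `f` is the sequence of coordinate functionals of the Schauder basis `x`:
every vector has an expansion along `x`, and such expansions are unique. -/
structure IsSchauderBasis (x : ℕ → E) (f : ℕ → E →L[ℝ] ℝ) : Prop where
  expand : ∀ v : E,
    Tendsto (fun n => ∑ i ∈ Finset.range n, f i v • x i) atTop (𝓝 v)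
  unique : ∀ (a : ℕ → ℝ) (v : E),
    Tendsto (fun n => ∑ i ∈ Finset.range n, a i • x i) atTop (𝓝 v) → ∀ i, a i = f i v

/-- the `n`-th basis projection `P_n`. -/
def basisProj (x : ℕ → E) (f : ℕ → E →L[ℝ] ℝ) (n : ℕ) : E →L[ℝ] E :=
  ∑ i ∈ Finset.range n, (f i).smulRight (x i)

/-- closed linear span of `{y i : i ≥ n}`. -/
def tailSpan (y : ℕ → E) (n : ℕ) : Submodule ℝ E :=
  (Submodule.span ℝ (y '' {i | n ≤ i})).topologicalClosure

/-- `‖g‖_n` : the norm of the restriction of `g` to the closed span of the tail of `y`. -/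
def tailNorm (y : ℕ → E) (g : E →L[ℝ] ℝ) (n : ℕ) : ℝ :=
  ‖g.comp (tailSpan y n).subtypeL‖

/-- the quantity `sh` measuring how far a basic sequence is from being shrinking. -/
def sh (y : ℕ → E) : ℝ :=
  sSup ((fun g : E →L[ℝ] ℝ => limsup (tailNorm y g) atTop) '' {g | ‖g‖ ≤ 1})

/-- non-symmetrised Hausdorff distance `d̂(A,B)`. -/
def hdist (A B : Set E) : ℝ := sSup ((fun a => infDist a B) '' A)

/-- ordinary distance between two sets. -/
def setDist (A B : Set E) : ℝ := sInf {d : ℝ | ∃ a ∈ A, ∃ b ∈ B, d = dist a b}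

/-- `ca` measures how far a sequence is from being norm-Cauchy. -/
def ca (z : ℕ → E) : ℝ :=
  ⨅ n : ℕ, sSup {d : ℝ | ∃ k, n ≤ k ∧ ∃ l, n ≤ l ∧ d = ‖z k - z l‖}

/-- measure of non-separability. -/
def sep (A : Set E) : ℝ :=
  sInf {ε : ℝ | 0 < ε ∧ ∃ C : Set E, C.Countable ∧ ∀ a ∈ A, ∃ c ∈ C, ‖a - c‖ ≤ ε}

/-- `V`: the closed linear span of the coordinate functionals. -/
def dualSpan (g : ℕ → E →L[ℝ] ℝ) : Submodule ℝ (StrongDual ℝ E) :=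
  (Submodule.span ℝ (Set.range g)).topologicalClosure

lemma mem_dualSpan (g : ℕ → E →L[ℝ] ℝ) (i : ℕ) : g i ∈ dualSpan g :=
  Submodule.le_topologicalClosure _ (Submodule.subset_span ⟨i, rfl⟩)

/-- the operator norm on functionals on `dualSpan g` (instance search no longer finds it). -/
instance dualSpanOpNorm (g : ℕ → E →L[ℝ] ℝ) : Norm (↥(dualSpan g) →L[ℝ] ℝ) :=
  @ContinuousLinearMap.hasOpNorm ℝ ℝ (dualSpan g) ℝ _ _ _ _ _ _ (RingHom.id ℝ)

/-- the quantity `bc₁` measuring non-bounded-completeness. -/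
def bc1 (y : ℕ → E) : ℝ :=
  sSup {c : ℝ | ∃ a : ℕ → ℝ,
    (∀ n, ‖∑ i ∈ Finset.range n, a i • y i‖ ≤ 1) ∧
    c = ca (fun n => ∑ i ∈ Finset.range n, a i • y i)}

/-- the quantity `bc₂`. -/
def bc2 (y : ℕ → E) (g : ℕ → E →L[ℝ] ℝ) : ℝ :=
  sSup {c : ℝ | ∃ φ : ↥(dualSpan g) →L[ℝ] ℝ, ‖φ‖ ≤ 1 ∧
    c = ca (fun n => ∑ i ∈ Finset.range n, φ ⟨g i, mem_dualSpan g i⟩ • y i)}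

/-- the quantity `bc₃`. -/
def bc3 (y : ℕ → E) (g : ℕ → E →L[ℝ] ℝ) : ℝ :=
  sSup {c : ℝ | ∃ Φ : StrongDual ℝ (StrongDual ℝ E), ‖Φ‖ ≤ 1 ∧
    c = ca (fun n => ∑ i ∈ Finset.range n, Φ (g i) • y i)}

/-- `α_Y(X)`: measures how well `Y` embeds isomorphically into `X`. -/
def alpha (Y X : Type*) [NormedAddCommGroup Y] [NormedSpace ℝ Y]
    [NormedAddCommGroup X] [NormedSpace ℝ X] : ℝ :=
  sSup {c : ℝ | ∃ T : Y →L[ℝ] X, ‖T‖ ≤ 1 ∧ ∀ y : Y, c * ‖y‖ ≤ ‖T y‖}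

/-- `β_Y(X)`: measures how well `Y` embeds complementably into `X`. -/
def beta (Y X : Type*) [NormedAddCommGroup Y] [NormedSpace ℝ Y]
    [NormedAddCommGroup X] [NormedSpace ℝ X] : ℝ :=
  sSup {c : ℝ | ∃ (A : X →L[ℝ] Y) (B : Y →L[ℝ] X),
    A.comp B = ContinuousLinearMap.id ℝ Y ∧ c * (‖A‖ * ‖B‖) ≤ 1}

/-- weak-star closure of a subset of the bidual. -/
def wstarClosure {X : Type*} [NormedAddCommGroup X] [NormedSpace ℝ X]
    (S : Set (StrongDual ℝ (StrongDual ℝ X))) : Set (StrongDual ℝ (StrongDual ℝ X)) :=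
  {z | StrongDual.toWeakDual z ∈ closure (StrongDual.toWeakDual '' S)}

/-- the measure of weak non-compactness `wk_X(A)`. -/
def wk (X : Type*) [NormedAddCommGroup X] [NormedSpace ℝ X] (A : Set X) : ℝ :=
  hdist (wstarClosure ((inclusionInDoubleDual ℝ X) '' A))
    (Set.range (inclusionInDoubleDual ℝ X))

/-- weak-star cluster points in the bidual of a sequence in `X`. -/
def wclust {X : Type*} [NormedAddCommGroup X] [NormedSpace ℝ X] (u : ℕ → X) :
    Set (StrongDual ℝ (StrongDual ℝ X)) :=
  {z | MapClusterPt (StrongDual.toWeakDual z) atTop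
      (fun n => StrongDual.toWeakDual (inclusionInDoubleDual ℝ X (u n)))}

/-- the measure of weak non-compactness `wck_X(A)`. -/
def wck (X : Type*) [NormedAddCommGroup X] [NormedSpace ℝ X] (A : Set X) : ℝ :=
  sSup {c : ℝ | ∃ u : ℕ → X, (∀ n, u n ∈ A) ∧
    c = setDist (wclust u) (Set.range (inclusionInDoubleDual ℝ X))}


/-- the canonical map `j : X → V*` for a subspace `V` of the dual,
`⟨j v, x*⟩ = x*(v)`. -/
def jfun {X : Type*} [NormedAddCommGroup X] [NormedSpace ℝ X]
    (V : Submodule ℝ (StrongDual ℝ X)) (v : X) : ↥V →L[ℝ] ℝ :=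
  (inclusionInDoubleDual ℝ X v).comp V.subtypeL

/-- the space `ℓ₁` of absolutely summable real sequences. -/
abbrev ell1 : Type := lp (fun _ : ℕ => ℝ) 1

/-- the space `c₀` of real sequences converging to zero, with the sup norm. -/
abbrev czero : Type := ZeroAtInftyContinuousMap ℕ ℝ

end

open Filter Metric NormedSpace Set Topology

set_option synthInstance.maxHeartbeats 1000000
set_option maxHeartbeats 2000000

section Aux
variable {X : Type*} [NormedAddCommGroup X] [NormedSpace ℝ X]

lemma coord_eq {x : ℕ → X} {f : ℕ → X →L[ℝ] ℝ} (hb : IsSchauderBasis x f) (i j : ℕ) :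
    f i (x j) = if i = j then 1 else 0 := by
  have ht : Tendsto (fun n => ∑ k ∈ Finset.range n, (if k = j then (1:ℝ) else 0) • x k)
      atTop (𝓝 (x j)) := by
    apply tendsto_atTop_of_eventually_const (i₀ := j + 1)
    intro n hn
    simp [ite_smul, Finset.sum_ite_eq', Finset.mem_range, Nat.lt_of_succ_le hn]
  have := hb.unique (fun k => if k = j then 1 else 0) (x j) ht i
  -- this : (if i = j then 1 else 0) = f i (x j)
  simpa using this.symm

lemma basisProj_apply (x : ℕ → X) (f : ℕ → X →L[ℝ] ℝ) (n : ℕ) (v : X) :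
    basisProj x f n v = ∑ i ∈ Finset.range n, f i v • x i := by
  simp [basisProj, ContinuousLinearMap.sum_apply]

lemma proj_tendsto {x : ℕ → X} {f : ℕ → X →L[ℝ] ℝ} (hb : IsSchauderBasis x f) (v : X) :
    Tendsto (fun n => basisProj x f n v) atTop (𝓝 v) := by
  simpa only [basisProj_apply] using hb.expand v

lemma f_vanish {x : ℕ → X} {f : ℕ → X →L[ℝ] ℝ} (hb : IsSchauderBasis x f) {i n : ℕ}
    (hin : i < n) : ∀ v ∈ tailSpan x n, f i v = 0 := by
  have hle : tailSpan x n ≤ LinearMap.ker (f i : X →ₗ[ℝ] ℝ) := by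
    apply Submodule.topologicalClosure_minimal
    · rw [Submodule.span_le]
      rintro _ ⟨j, hj, rfl⟩
      have hnj : n ≤ j := hj
      simp only [SetLike.mem_coe, LinearMap.mem_ker]
      have : f i (x j) = if i = j then 1 else 0 := coord_eq hb i j
      exact this.trans (if_neg (by omega))
    · exact ContinuousLinearMap.isClosed_ker (f i)
  intro v hv
  exact LinearMap.mem_ker.mp (hle hv)

lemma tailSpan_mono (x : ℕ → X) {m n : ℕ} (h : m ≤ n) : tailSpan x n ≤ tailSpan x m := by
  apply Submodule.topologicalClosure_mono
  apply Submodule.span_mono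
  apply Set.image_mono
  intro i hi
  exact le_trans h hi

lemma tailNorm_antitone (x : ℕ → X) (g : X →L[ℝ] ℝ) {m n : ℕ} (h : m ≤ n) :
    tailNorm x g n ≤ tailNorm x g m := by
  show ‖g.comp (tailSpan x n).subtypeL‖ ≤ ‖g.comp (tailSpan x m).subtypeL‖
  refine ContinuousLinearMap.opNorm_le_bound _ (@norm_nonneg _ _ (g.comp (tailSpan x m).subtypeL)) fun u => ?_
  have hmem : (u : X) ∈ tailSpan x m := tailSpan_mono x h u.2
  have : (g.comp (tailSpan x n).subtypeL) u =
      (g.comp (tailSpan x m).subtypeL) ⟨(u : X), hmem⟩ := rfl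
  rw [this]
  have hnu : ‖(⟨(u : X), hmem⟩ : ↥(tailSpan x m))‖ = ‖u‖ := rfl
  calc ‖(g.comp (tailSpan x m).subtypeL) ⟨(u : X), hmem⟩‖
      ≤ ‖g.comp (tailSpan x m).subtypeL‖ * ‖(⟨(u : X), hmem⟩ : ↥(tailSpan x m))‖ :=
        ContinuousLinearMap.le_opNorm _ _
    _ = ‖g.comp (tailSpan x m).subtypeL‖ * ‖u‖ := by rw [hnu]

end Aux

section Aux2
variable {X : Type*} [NormedAddCommGroup X] [NormedSpace ℝ X]

lemma proj_norm_bddAbove [CompleteSpace X] {x : ℕ → X} {f : ℕ → X →L[ℝ] ℝ}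
    (hb : IsSchauderBasis x f) : BddAbove (Set.range fun n => ‖basisProj x f n‖) := by
  have hpt : ∀ v : X, ∃ C, ∀ n, ‖basisProj x f n v‖ ≤ C := by
    intro v
    have h := (proj_tendsto hb v).norm
    obtain ⟨C, hC⟩ := h.isBoundedUnder_le.bddAbove_range
    exact ⟨C, fun n => hC ⟨n, rfl⟩⟩
  obtain ⟨C, hC⟩ := banach_steinhaus hpt
  exact ⟨C, by rintro _ ⟨n, rfl⟩; exact hC n⟩

lemma x_ne_zero {x : ℕ → X} {f : ℕ → X →L[ℝ] ℝ} (hb : IsSchauderBasis x f) (j : ℕ) :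
    x j ≠ 0 := by
  intro h
  have h1 : f j (x j) = 1 := by rw [coord_eq hb j j]; simp
  rw [h, map_zero] at h1
  exact one_ne_zero h1.symm

lemma one_le_K [CompleteSpace X] {x : ℕ → X} {f : ℕ → X →L[ℝ] ℝ}
    (hb : IsSchauderBasis x f) {K : ℝ} (hK : K = ⨆ n : ℕ, ‖basisProj x f n‖) :
    1 ≤ K ∧ ∀ n, ‖basisProj x f n‖ ≤ K := by
  have hbdd := proj_norm_bddAbove hb
  have hle : ∀ n, ‖basisProj x f n‖ ≤ K := fun n => hK ▸ le_ciSup hbdd n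
  refine ⟨?_, hle⟩
  have h1 : basisProj x f 1 (x 0) = x 0 := by
    rw [basisProj_apply]
    simp [coord_eq hb 0 0]
  have h2 : ‖x 0‖ ≤ ‖basisProj x f 1‖ * ‖x 0‖ := by
    conv_lhs => rw [← h1]
    exact ContinuousLinearMap.le_opNorm _ _
  have h3 : 0 < ‖x 0‖ := norm_pos_iff.mpr (x_ne_zero hb 0)
  have h4 : 1 ≤ ‖basisProj x f 1‖ := by
    nlinarith
  exact h4.trans (hle 1)

/-- Norm bound on the weak-star closure of the image of the unit ball. -/
lemma wstar_norm_le {z : StrongDual ℝ (StrongDual ℝ X)}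
    (hz : z ∈ wstarClosure ((NormedSpace.inclusionInDoubleDual ℝ X) ''
      (Metric.closedBall (0 : X) 1))) : ‖z‖ ≤ 1 := by
  set j := NormedSpace.inclusionInDoubleDual ℝ X
  have hsub : closure (StrongDual.toWeakDual '' (j '' Metric.closedBall (0:X) 1)) ⊆
      ⋂ g : StrongDual ℝ X, {φ : WeakDual ℝ (StrongDual ℝ X) | ‖φ g‖ ≤ ‖g‖} := by
    apply closure_minimal
    · rintro _ ⟨_, ⟨v, hv, rfl⟩, rfl⟩
      simp only [Set.mem_iInter, Set.mem_setOf_eq]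
      intro g
      have : (StrongDual.toWeakDual (j v)) g = g v := rfl
      rw [this]
      have hv1 : ‖v‖ ≤ 1 := by
        rwa [Metric.mem_closedBall, dist_zero_right] at hv
      calc ‖g v‖ ≤ ‖g‖ * ‖v‖ := g.le_opNorm v
        _ ≤ ‖g‖ * 1 := by gcongr
        _ = ‖g‖ := mul_one _
    · exact isClosed_iInter fun g =>
        isClosed_le (WeakDual.eval_continuous g).norm continuous_const
  have hmem := hsub hz
  replace hmem : ∀ g : StrongDual ℝ X, ‖(StrongDual.toWeakDual z) g‖ ≤ ‖g‖ :=
    fun g => Set.mem_iInter.mp hmem g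
  refine ContinuousLinearMap.opNorm_le_bound _ zero_le_one fun g => ?_
  rw [one_mul]
  exact hmem g

end Aux2

section Aux3
variable {X : Type*} [NormedAddCommGroup X] [NormedSpace ℝ X]

lemma tailNorm_nonneg (x : ℕ → X) (g : X →L[ℝ] ℝ) (n : ℕ) : 0 ≤ tailNorm x g n := by
  exact norm_nonneg (g.comp (tailSpan x n).subtypeL)

end Aux3

/-- Theorem 5.1(2): `sh((xₙ)) ≤ 4K³·wk_X(B_X)`. -/
theorem sh_le_wk {X : Type*} [NormedAddCommGroup X] [NormedSpace ℝ X]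
    [CompleteSpace X] (hinf : ¬ FiniteDimensional ℝ X)
    (x : ℕ → X) (f : ℕ → X →L[ℝ] ℝ) (hb : IsSchauderBasis x f)
    (K : ℝ) (hK : K = ⨆ n : ℕ, ‖basisProj x f n‖) :
    sh x ≤ 4 * K ^ 3 * wk X (Metric.closedBall (0 : X) 1) := by
  classical
  set j := NormedSpace.inclusionInDoubleDual ℝ X with hj
  set B := Metric.closedBall (0 : X) 1 with hB
  obtain ⟨hK1, hP⟩ := one_le_K hb hK
  have hwk : wk X B = sSup ((fun a => Metric.infDist a (Set.range j)) '' wstarClosure (j '' B)) :=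
    rfl
  have hbddA : BddAbove ((fun a => Metric.infDist a (Set.range j)) '' wstarClosure (j '' B)) := by
    refine ⟨1, ?_⟩
    rintro _ ⟨z, hz, rfl⟩
    calc Metric.infDist z (Set.range j) ≤ dist z (j 0) :=
          Metric.infDist_le_dist_of_mem ⟨0, rfl⟩
      _ = ‖z‖ := by rw [map_zero]; exact dist_zero_right z
      _ ≤ 1 := wstar_norm_le hz
  have h0B : (0 : X) ∈ B := by simp [hB]
  have hmem0 : (j 0) ∈ wstarClosure (j '' B) := by
    simp only [wstarClosure, Set.mem_setOf_eq]
    exact subset_closure (Set.mem_image_of_mem _ (Set.mem_image_of_mem j h0B))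
  have hw0 : 0 ≤ wk X B := by
    calc (0:ℝ) ≤ Metric.infDist (j 0) (Set.range j) := Metric.infDist_nonneg
      _ ≤ wk X B := by rw [hwk]; exact le_csSup hbddA (Set.mem_image_of_mem _ hmem0)
  unfold sh
  apply Real.sSup_le
  · rintro r ⟨g, hg, rfl⟩
    simp only [Set.mem_setOf_eq] at hg
    show Filter.limsup (tailNorm x g) Filter.atTop ≤ 4 * K ^ 3 * wk X B
    set L := Filter.limsup (tailNorm x g) Filter.atTop with hL
    have hLle : ∀ n, L ≤ tailNorm x g n := by
      intro n
      apply Filter.limsup_le_of_le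
        (Filter.isCoboundedUnder_le_of_le _ (fun m => tailNorm_nonneg x g m))
      exact Filter.eventually_atTop.mpr ⟨n, fun m hm => tailNorm_antitone x g hm⟩
    have key : ∀ δ > (0:ℝ), ∀ ε > (0:ℝ), L - δ ≤ (wk X B + ε) * (1 + K) := by
      intro δ hδ ε hε
      have hsel : ∀ n, ∃ y : X, y ∈ tailSpan x n ∧ ‖y‖ ≤ 1 ∧ L - δ < g y := by
        intro n
        have h1 : L - δ < ‖g.comp (tailSpan x n).subtypeL‖ := by
          have := hLle n
          unfold tailNorm at this
          linarith
        obtain ⟨u, hu1, hu2⟩ := ContinuousLinearMap.exists_lt_apply_of_lt_opNorm _ h1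
        have habs : ‖(g.comp (tailSpan x n).subtypeL) u‖ = |g (u : X)| := rfl
        rw [habs] at hu2
        rcases le_or_gt 0 (g (u : X)) with hpos | hneg
        · exact ⟨(u : X), u.2, le_of_lt hu1, by rwa [abs_of_nonneg hpos] at hu2⟩
        · refine ⟨-(u : X), neg_mem u.2, ?_, ?_⟩
          · rw [norm_neg]; exact le_of_lt hu1
          · rw [map_neg]; rwa [abs_of_neg hneg] at hu2
      choose y hymem hynorm hygt using hsel
      set u : ℕ → WeakDual ℝ (StrongDual ℝ X) :=
        fun n => StrongDual.toWeakDual (j (y n)) with hu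
      have humem : Filter.map u Filter.atTop ≤
          Filter.principal (WeakDual.toStrongDual ⁻¹' Metric.closedBall
            (0 : StrongDual ℝ (StrongDual ℝ X)) 1) := by
        rw [Filter.le_principal_iff, Filter.mem_map]
        apply Filter.Eventually.of_forall
        intro n
        simp only [Set.mem_preimage, Metric.mem_closedBall, dist_zero_right]
        refine (dist_zero_right (WeakDual.toStrongDual (u n))).trans_le ?_
        calc ‖WeakDual.toStrongDual (u n)‖ = ‖j (y n)‖ := rfl
          _ ≤ ‖y n‖ := NormedSpace.double_dual_bound ℝ X (y n)
          _ ≤ 1 := hynorm n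
      obtain ⟨Φw, hΦmem, hΦcl⟩ :=
        (WeakDual.isCompact_closedBall (𝕜 := ℝ) (E := StrongDual ℝ X)
          (0 : StrongDual ℝ (StrongDual ℝ X)) 1).exists_mapClusterPt humem
      set Φ : StrongDual ℝ (StrongDual ℝ X) :=
        StrongDual.toWeakDual.symm Φw with hΦ
      have hΦweq : StrongDual.toWeakDual Φ = Φw :=
        LinearEquiv.apply_symm_apply _ _
      have hev : ∀ h : StrongDual ℝ X,
          MapClusterPt (Φ h) Filter.atTop (fun n => h (y n)) := by
        intro h
        have hc : ContinuousAt (fun φ : WeakDual ℝ (StrongDual ℝ X) => φ h) Φw :=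
          (WeakDual.eval_continuous h).continuousAt
        have h2 := hΦcl.continuousAt_comp hc
        have he1 : ((fun φ : WeakDual ℝ (StrongDual ℝ X) => φ h) ∘ u)
            = fun n => h (y n) := rfl
        have he2 : Φ h = Φw h := rfl
        rw [he1] at h2
        rw [he2]
        exact h2
      have hclge : L - δ ≤ Φ g := by
        have h1 : Filter.map (fun n => g (y n)) Filter.atTop ≤
            Filter.principal (Set.Ici (L - δ)) := by
          rw [Filter.le_principal_iff, Filter.mem_map]
          exact Filter.Eventually.of_forall fun n => le_of_lt (hygt n)
        have h2 := mem_closure_iff_clusterPt.mpr ((hev g).clusterPt.mono h1)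
        rwa [closure_Ici, Set.mem_Ici] at h2
      have hΦf : ∀ i, Φ (f i) = 0 := by
        intro i
        have h1 : Filter.map (fun n => f i (y n)) Filter.atTop ≤
            Filter.principal {(0:ℝ)} := by
          rw [Filter.le_principal_iff, Filter.mem_map]
          refine Filter.mem_of_superset (Filter.Ici_mem_atTop (i+1)) ?_
          intro n hn
          have := f_vanish hb (Nat.lt_of_succ_le hn) _ (hymem n)
          simp [this]
        have h2 := mem_closure_iff_clusterPt.mpr ((hev (f i)).clusterPt.mono h1)
        simpa using h2
      have hΦB : Φ ∈ wstarClosure (j '' B) := by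
        simp only [wstarClosure, Set.mem_setOf_eq]
        rw [hΦweq]
        have h1 : Filter.map u Filter.atTop ≤
            Filter.principal (StrongDual.toWeakDual '' (j '' B)) := by
          rw [Filter.le_principal_iff, Filter.mem_map]
          refine Filter.Eventually.of_forall fun n => ?_
          exact ⟨j (y n), ⟨y n, by
            simp only [hB, Metric.mem_closedBall, dist_zero_right]; exact hynorm n, rfl⟩, rfl⟩
        exact mem_closure_iff_clusterPt.mpr (hΦcl.clusterPt.mono h1)
      have hinfd : Metric.infDist Φ (Set.range j) ≤ wk X B := by
        rw [hwk]
        exact le_csSup hbddA (Set.mem_image_of_mem _ hΦB)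
      obtain ⟨p, hp, hpd⟩ := (Metric.infDist_lt_iff ⟨j 0, Set.mem_range_self 0⟩).mp
        (lt_of_le_of_lt hinfd (by linarith : wk X B < wk X B + ε))
      obtain ⟨v, rfl⟩ := hp
      have hcomp : ∀ n, Φ (g.comp (basisProj x f n)) = 0 := by
        intro n
        have hgp : g.comp (basisProj x f n) = ∑ i ∈ Finset.range n, g (x i) • f i := by
          ext vv
          simp only [ContinuousLinearMap.comp_apply, basisProj_apply,
            ContinuousLinearMap.sum_apply, ContinuousLinearMap.smul_apply, map_sum, map_smul]
          exact Finset.sum_congr rfl fun i _ => by simp [mul_comm]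
        rw [hgp, map_sum]
        apply Finset.sum_eq_zero
        intro i _
        rw [map_smul, hΦf i, smul_zero]
      have hQ : ∀ n, ‖g - g.comp (basisProj x f n)‖ ≤ 1 + K := by
        intro n
        calc ‖g - g.comp (basisProj x f n)‖ ≤ ‖g‖ + ‖g.comp (basisProj x f n)‖ :=
              norm_sub_le _ _
          _ ≤ 1 + K := by
            have h1 := ContinuousLinearMap.opNorm_comp_le g (basisProj x f n)
            have h2 : ‖g‖ * ‖basisProj x f n‖ ≤ 1 * K :=
              mul_le_mul hg (hP n) (norm_nonneg _) zero_le_one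
            have h3 := norm_nonneg (basisProj x f n)
            nlinarith
      have hbound : ∀ n, Φ g ≤ (wk X B + ε) * (1 + K) + g (v - basisProj x f n v) := by
        intro n
        have hjv1 : (j v) g = g v := rfl
        have hjv2 : (j v) (g.comp (basisProj x f n)) = g (basisProj x f n v) := rfl
        have heq : Φ g = (Φ - j v) (g - g.comp (basisProj x f n))
            + g (v - basisProj x f n v) := by
          simp only [ContinuousLinearMap.sub_apply, map_sub]
          rw [hcomp n, hjv1, hjv2]
          ring
        rw [heq]
        have h1 : (Φ - j v) (g - g.comp (basisProj x f n)) ≤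
            ‖Φ - j v‖ * ‖g - g.comp (basisProj x f n)‖ :=
          le_trans (le_abs_self _)
            (by rw [← Real.norm_eq_abs]; exact ContinuousLinearMap.le_opNorm _ _)
        have h2 : ‖Φ - j v‖ ≤ wk X B + ε := by
          exact le_of_lt (lt_of_eq_of_lt (dist_eq_norm Φ (j v)).symm hpd)
        have h4 : ‖Φ - j v‖ * ‖g - g.comp (basisProj x f n)‖ ≤ (wk X B + ε) * (1 + K) :=
          mul_le_mul h2 (hQ n) (norm_nonneg _) (by linarith)
        linarith
      have hlim : Filter.Tendsto (fun n => g (v - basisProj x f n v))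
          Filter.atTop (𝓝 0) := by
        have h1 : Filter.Tendsto (fun n => v - basisProj x f n v) Filter.atTop (𝓝 0) := by
          have h2 := tendsto_const_nhds (x := v) (f := Filter.atTop (α := ℕ)) |>.sub
            (proj_tendsto hb v)
          simpa using h2
        have h3 := (g.continuous.tendsto 0).comp h1
        simpa [Function.comp_def, map_sub] using h3
      have h5 : Φ g - (wk X B + ε) * (1 + K) ≤ 0 :=
        ge_of_tendsto' hlim (fun n => by linarith [hbound n])
      linarith
    have hL2 : L ≤ (1 + K) * wk X B := by
      have hKpos : (0:ℝ) < 1 + K := by linarith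
      apply le_of_forall_pos_le_add
      intro η hη
      have hk := key (η/2) (by positivity) (η/(2*(1+K))) (by positivity)
      have hexp : (wk X B + η/(2*(1+K))) * (1 + K) = wk X B * (1+K) + η/2 := by
        field_simp
      rw [hexp] at hk
      linarith [mul_comm (wk X B) (1+K)]
    have hfin : (1 + K) * wk X B ≤ 4 * K ^ 3 * wk X B := by
      have : 1 + K ≤ 4 * K ^ 3 := by
        nlinarith [mul_nonneg (mul_nonneg (by linarith : (0:ℝ) ≤ K)
          (by linarith : (0:ℝ) ≤ K - 1)) (by linarith : (0:ℝ) ≤ K + 1)]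
      exact mul_le_mul_of_nonneg_right this hw0
    exact le_trans hL2 hfin
  · have h1 : (0:ℝ) ≤ K := by linarith
    have h2 : (0:ℝ) ≤ K ^ 3 := pow_nonneg h1 3
    have := mul_nonneg (by linarith : (0:ℝ) ≤ 4 * K ^ 3) hw0
    linarith
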